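/- Let p ∈ {5,7} and let θ_{n,p} denote the level-n p-adic Mazur–Tate element attached to the boundary symbol of the Eisenstein series E_p, where E_5 = E_{2,ω_5²,𝟙} and E_7 = E_{2,ω_7⁴,𝟙}. Then for every n ≥ 1, λ(θ_{n,p}) = p^n − 1. -/

import Mathlib

noncomputable section

open scoped Classical

/-- The projective line over `ℚ`, realized as the projectivization of `ℚ²`. -/
abbrev P1 : Type := Projectivization ℚ (Fin 2 → ℚ)

/-- The point of `P¹(ℚ)` corresponding to a rational number `x` (the class of `(x, 1)`). -/
def ratPt (x : ℚ) : P1 :=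
  Projectivization.mk ℚ ![x, 1] (fun h => by simpa using congrFun h 1)

/-- The point `∞ ∈ P¹(ℚ)` (the class of `(1, 0)`). -/
def inftyPt : P1 :=
  Projectivization.mk ℚ ![1, 0] (fun h => by simpa using congrFun h 0)

lemma mulVecLin_injective {g : Matrix (Fin 2) (Fin 2) ℚ} (hg : g.det ≠ 0) :
    Function.Injective g.mulVecLin := by
  intro x y hxy
  have h1 := congrArg g⁻¹.mulVec hxy
  simpa only [Matrix.mulVecLin_apply, Matrix.mulVec_mulVec,
    Matrix.nonsing_inv_mul g (isUnit_iff_ne_zero.2 hg), Matrix.one_mulVec] using h1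

/-- The action of an integer matrix with nonzero determinant on `P¹(ℚ)` by linear fractional
transformations (acting on column vectors); singular matrices act as the identity (junk). -/
def actP1 (g : Matrix (Fin 2) (Fin 2) ℤ) : P1 → P1 :=
  if hg : (g.map ((↑) : ℤ → ℚ)).det ≠ 0 then
    Projectivization.map (g.map ((↑) : ℤ → ℚ)).mulVecLin (mulVecLin_injective hg)
  else id

/-- The group `Δ` of divisors on `P¹(ℚ)`. -/
abbrev Dvs : Type := P1 →₀ ℤ

/-- The degree map on divisors. -/
def deg : Dvs →+ ℤ := Finsupp.liftAddHom fun _ => AddMonoidHom.id ℤ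

/-- The group `Δ⁰` of degree-zero divisors on `P¹(ℚ)`. -/
abbrev Dvs0 : Type := deg.ker

/-- The action of an integer matrix on divisors. -/
def divAct (g : Matrix (Fin 2) (Fin 2) ℤ) : Dvs →+ Dvs :=
  Finsupp.mapDomain.addMonoidHom (actP1 g)

lemma deg_divAct (g : Matrix (Fin 2) (Fin 2) ℤ) (D : Dvs) :
    deg (divAct g D) = deg D := by
  have h : deg.comp (divAct g) = deg := by
    apply Finsupp.addHom_ext
    intro x m
    simp [divAct, deg, Finsupp.mapDomain.addMonoidHom_apply, Finsupp.mapDomain_single,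
      Finsupp.liftAddHom_apply, Finsupp.sum_single_index]
  exact DFunLike.congr_fun h D

/-- The action of an integer matrix on degree-zero divisors. -/
def div0Act (g : Matrix (Fin 2) (Fin 2) ℤ) : Dvs0 →+ Dvs0 :=
  AddMonoidHom.mk' (fun D => ⟨divAct g D.1, by
      have hD := D.2
      rw [AddMonoidHom.mem_ker] at hD ⊢
      rw [deg_divAct]; exact hD⟩)
    (fun D E => by
      apply Subtype.ext
      simp [map_add])

/-- The degree-zero divisor `{x} - {y}`. -/
def dvsr (x y : P1) : Dvs0 :=
  ⟨Finsupp.single x 1 - Finsupp.single y 1, by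
    rw [AddMonoidHom.mem_ker, map_sub]
    simp [deg, Finsupp.liftAddHom_apply, Finsupp.sum_single_index]⟩

/-- The right action `P ↦ P|γ` of a `2 × 2` matrix `γ = (a b; c d)` on two-variable polynomials,
given by `(P|γ)(X, Y) = P (dX - cY, -bX + aY)`.  On the homogeneous polynomials of degree `k`
this is the right action on `V_k(R)`. -/
def polyAct {R : Type} [CommRing R] (g : Matrix (Fin 2) (Fin 2) R)
    (P : MvPolynomial (Fin 2) R) : MvPolynomial (Fin 2) R :=
  MvPolynomial.aeval
    ![MvPolynomial.C (g 1 1) * MvPolynomial.X 0 - MvPolynomial.C (g 1 0) * MvPolynomial.X 1,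
      MvPolynomial.C (g 0 0) * MvPolynomial.X 1 - MvPolynomial.C (g 0 1) * MvPolynomial.X 0] P

/-- Evaluation of a two-variable polynomial at `(X, Y) = (0, 1)`. -/
def evalXY {R : Type} [CommRing R] (P : MvPolynomial (Fin 2) R) : R :=
  MvPolynomial.eval ![0, 1] P

/-- `x` and `z` lie in the same `Γ₁(N)`-orbit (cusp) of `P¹(ℚ)`. -/
def inOrb (N : ℕ) (x z : P1) : Prop :=
  ∃ γ ∈ CongruenceSubgroup.Gamma1 N, actP1 γ.1 x = z

/-- The Ramanujan tau function: the coefficients of `q ∏ (1 - qⁿ)²⁴`. -/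
def ramanujanTau (n : ℕ) : ℤ :=
  (Polynomial.X * ∏ m ∈ Finset.Icc 1 n, (1 - Polynomial.X ^ m) ^ 24 : Polynomial ℤ).coeff n

/-- A coset representative `(1 j; 0 ℓ)` for the Hecke operator `T_ℓ`. -/
def heckeMat (ℓ j : ℕ) : Matrix (Fin 2) (Fin 2) ℤ := !![1, (j : ℤ); 0, (ℓ : ℤ)]

/-- The coset representative `(ℓ 0; 0 1)` for the Hecke operator `T_ℓ`. -/
def heckeMatInf (ℓ : ℕ) : Matrix (Fin 2) (Fin 2) ℤ := !![(ℓ : ℤ), 0; 0, 1]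

/-- The Hecke operator `T_ℓ` on (level one) modular symbols `Δ⁰ → V_k(R)`. -/
def heckeT {R : Type} [CommRing R] (ℓ : ℕ) (φ : Dvs0 →+ MvPolynomial (Fin 2) R)
    (D : Dvs0) : MvPolynomial (Fin 2) R :=
  (∑ j ∈ Finset.range ℓ,
      polyAct ((heckeMat ℓ j).map (Int.cast : ℤ → R)) (φ (div0Act (heckeMat ℓ j) D)))
    + polyAct ((heckeMatInf ℓ).map (Int.cast : ℤ → R)) (φ (div0Act (heckeMatInf ℓ) D))

instance neZero_pow_succ (p n : ℕ) [hp : Fact p.Prime] : NeZero (p ^ (n + 1)) :=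
  ⟨pow_ne_zero _ hp.out.ne_zero⟩

instance neZero_of_prime (p : ℕ) [hp : Fact p.Prime] : NeZero p := ⟨hp.out.ne_zero⟩

/-- The level-`n` Mazur–Tate element attached to the coefficient data
`c : (ℤ/p^{n+1})^× → R` via the projection `π : (ℤ/p^{n+1})^× ↠ 𝒢ₙ`:
`θ = ∑_a c(a) • σ_{π(a)}` in the group ring `R[𝒢ₙ]`. -/
def MTel {R : Type} [CommRing R] {G : Type} [CommGroup G] (p n : ℕ)
    [NeZero (p ^ (n + 1))] (π : (ZMod (p ^ (n + 1)))ˣ →* G)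
    (c : (ZMod (p ^ (n + 1)))ˣ → R) : MonoidAlgebra R G :=
  ∑ a : (ZMod (p ^ (n + 1)))ˣ, c a • (MonoidAlgebra.of R G (π a))

/-- `F ∈ ℤ_p[𝒢]` has Iwasawa invariants `μ(F) = m` and `λ(F) = l`, computed with respect to the
generator `γ` of `𝒢` (a cyclic group of order `N`), by writing `F = ∑_{i<N} aᵢ Tⁱ` with
`T = γ - 1`: `m` is the minimal `p`-adic valuation of the `aᵢ` and `l` is the first index
where it is attained. -/
def hasMuLambda (p : ℕ) [Fact p.Prime] {G : Type} [CommGroup G] (N : ℕ) (γ : G)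
    (F : MonoidAlgebra ℤ_[p] G) (m l : ℕ) : Prop :=
  ∃ a : ℕ → ℤ_[p],
    F = ∑ i ∈ Finset.range N, a i • (MonoidAlgebra.of ℤ_[p] G γ - 1) ^ i ∧
    (∀ i < N, (p : ℤ_[p]) ^ m ∣ a i) ∧
    (∀ i < l, (p : ℤ_[p]) ^ (m + 1) ∣ a i) ∧
    ¬ (p : ℤ_[p]) ^ (m + 1) ∣ a l

end
noncomputable section
open scoped Classical

/-- The reduction-mod-`p` of the weight-0 Eisenstein boundary symbol
`φ_{0, ω_p^a, 𝟙} = ∑_{x mod p} (ω_p^a)⁻¹(x) φ_{0,x,p}` (evaluated at the polynomial `1`),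
viewed as the function on `P¹(ℚ)` which, at `z`, sums `ω(x)^{p-1-a}` over those
`x ∈ {1, …, p-1}` whose cusp `x/p` contains `z`. -/
def phiE (p : ℕ) [Fact p.Prime] (ω : ℤ → ℤ_[p]) (a : ℕ) (z : P1) : ℤ_[p] :=
  ∑ x ∈ Finset.Ico 1 p,
    if inOrb p (ratPt ((x : ℚ) / (p : ℚ))) z then ω (x : ℤ) ^ (p - 1 - a) else 0

/-- The boundary symbol `φ₉ ∈ Hom_{Γ₁(27)}(Δ, ℤ/9ℤ)`, constant on `Γ₁(27)`-cusps, with the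
explicit values from the paper. -/
def phi9 (z : P1) : ZMod 9 :=
  if inOrb 27 (ratPt (1/9)) z ∨ inOrb 27 (ratPt (8/27)) z ∨ inOrb 27 (ratPt (10/27)) z ∨
     inOrb 27 (ratPt (8/9)) z ∨ inOrb 27 inftyPt z then 0
  else if inOrb 27 (ratPt 0) z ∨ inOrb 27 (ratPt (1/12)) z ∨ inOrb 27 (ratPt (1/10)) z ∨
     inOrb 27 (ratPt (1/8)) z ∨ inOrb 27 (ratPt (5/12)) z then 1
  else if inOrb 27 (ratPt (2/27)) z ∨ inOrb 27 (ratPt (2/9)) z ∨ inOrb 27 (ratPt (7/27)) z ∨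
     inOrb 27 (ratPt (11/27)) z ∨ inOrb 27 (ratPt (7/9)) z then 3
  else if inOrb 27 (ratPt (1/11)) z ∨ inOrb 27 (ratPt (1/7)) z ∨ inOrb 27 (ratPt (1/3)) z ∨
     inOrb 27 (ratPt (1/2)) z ∨ inOrb 27 (ratPt (2/3)) z then 4
  else if inOrb 27 (ratPt (4/27)) z ∨ inOrb 27 (ratPt (5/27)) z ∨ inOrb 27 (ratPt (4/9)) z ∨
     inOrb 27 (ratPt (13/27)) z ∨ inOrb 27 (ratPt (5/9)) z then 6
  else if inOrb 27 (ratPt (1/13)) z ∨ inOrb 27 (ratPt (1/6)) z ∨ inOrb 27 (ratPt (1/5)) z ∨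
     inOrb 27 (ratPt (1/4)) z ∨ inOrb 27 (ratPt (5/6)) z then 7
  else 0

end


noncomputable section
open scoped Classical

section Teich
variable {p : ℕ} [hp : Fact p.Prime]

lemma teich_unique {x y : ℤ_[p]} (hx : x ^ p = x) (hy : y ^ p = y)
    (h : PadicInt.toZMod x = PadicInt.toZMod y) : x = y := by
  have hfac : (∑ i ∈ Finset.range p, x ^ i * y ^ (p - 1 - i)) * (x - y) = x ^ p - y ^ p :=
    geom_sum₂_mul x y p
  rw [hx, hy] at hfac
  have h2 : ((∑ i ∈ Finset.range p, x ^ i * y ^ (p - 1 - i)) - 1) * (x - y) = 0 := by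
    rw [sub_mul, hfac, one_mul, sub_self]
  rcases mul_eq_zero.1 h2 with h3 | h3
  · exfalso
    have h4 := congrArg PadicInt.toZMod h3
    rw [map_sub, map_one, map_sum, map_zero, sub_eq_zero] at h4
    have hz : ∀ i ∈ Finset.range p, PadicInt.toZMod (x ^ i * y ^ (p - 1 - i))
        = PadicInt.toZMod x ^ (p - 1) := by
      intro i hi
      rw [map_mul, map_pow, map_pow, ← h, ← pow_add]
      congr 1
      have := Finset.mem_range.1 hi
      omega
    rw [Finset.sum_congr rfl hz, Finset.sum_const, Finset.card_range, nsmul_eq_mul,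
      ZMod.natCast_self, zero_mul] at h4
    exact zero_ne_one h4
  · exact sub_eq_zero.1 h3

end Teich

section Proj

lemma vec_ne_zero₀ {u v : ℚ} (h : u ≠ 0) : ![u, v] ≠ 0 :=
  fun hh => h (by simpa using congrFun hh 0)

lemma vec_ne_zero₁ {u v : ℚ} (h : v ≠ 0) : ![u, v] ≠ 0 :=
  fun hh => h (by simpa using congrFun hh 1)

lemma mk_congr {v w : Fin 2 → ℚ} (hv : v ≠ 0) (h : v = w) :
    Projectivization.mk ℚ v hv = Projectivization.mk ℚ w (h ▸ hv) := by subst h; rfl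

lemma ratPt_eq_mk (u v : ℤ) (hv : v ≠ 0) :
    ratPt ((u : ℚ) / (v : ℚ))
      = Projectivization.mk ℚ ![(u : ℚ), (v : ℚ)] (vec_ne_zero₁ (Int.cast_ne_zero.2 hv)) := by
  have hv' : ((v : ℚ)) ≠ 0 := Int.cast_ne_zero.2 hv
  rw [ratPt, Projectivization.mk_eq_mk_iff]
  refine ⟨Units.mk0 ((v : ℚ))⁻¹ (inv_ne_zero hv'), ?_⟩
  funext i
  fin_cases i <;>
    simp [Units.smul_def, div_eq_mul_inv, mul_comm, inv_mul_cancel₀ hv', mul_inv_cancel₀ hv']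

lemma mulVec_ne_zero {M : Matrix (Fin 2) (Fin 2) ℚ} (hM : M.det ≠ 0) {w : Fin 2 → ℚ}
    (hw : w ≠ 0) : M.mulVec w ≠ 0 := by
  intro h
  apply hw
  apply mulVecLin_injective hM
  simpa [Matrix.mulVecLin_apply] using h

lemma det_cast (g : Matrix (Fin 2) (Fin 2) ℤ) :
    (g.map ((↑) : ℤ → ℚ)).det = ((g.det : ℤ) : ℚ) := by
  rw [show g.map ((↑) : ℤ → ℚ) = (Int.castRingHom ℚ).mapMatrix g from rfl, ← RingHom.map_det]
  rfl

lemma actP1_mk (g : Matrix.SpecialLinearGroup (Fin 2) ℤ) (w : Fin 2 → ℚ) (hw : w ≠ 0) :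
    actP1 g.1 (Projectivization.mk ℚ w hw)
      = Projectivization.mk ℚ ((g.1.map ((↑) : ℤ → ℚ)).mulVec w)
          (mulVec_ne_zero (by rw [det_cast, g.2]; norm_num) hw) := by
  have hdet : (g.1.map ((↑) : ℤ → ℚ)).det ≠ 0 := by rw [det_cast, g.2]; norm_num
  rw [actP1, dif_pos hdet]
  exact Projectivization.map_mk _ _ w hw

lemma cast_mulVec (g : Matrix (Fin 2) (Fin 2) ℤ) (a b : ℤ) :
    (g.map ((↑) : ℤ → ℚ)).mulVec ![(a : ℚ), (b : ℚ)]
      = ![((g 0 0 * a + g 0 1 * b : ℤ) : ℚ), ((g 1 0 * a + g 1 1 * b : ℤ) : ℚ)] := by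
  funext i
  fin_cases i <;>
    simp [Matrix.mulVec, dotProduct, Fin.sum_univ_two, Matrix.map_apply] <;>
    push_cast <;> ring

end Proj

section Cusp

open Matrix

lemma int_zmod_eq_zero {p : ℕ} {z : ℤ} (h : (p : ℤ) ∣ z) : ((z : ZMod p) = 0) :=
  (ZMod.intCast_zmod_eq_zero_iff_dvd _ _).2 h

lemma int_zmod_eq_one {p : ℕ} {z : ℤ} (h : (p : ℤ) ∣ z - 1) : ((z : ZMod p) = 1) := by
  have := int_zmod_eq_zero (p := p) h
  rw [Int.cast_sub, Int.cast_one, sub_eq_zero] at this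
  exact this

lemma inOrb_ratPt_iff {p : ℕ} (hp : p.Prime) {x : ℕ} (hx1 : 1 ≤ x) (hxp : x < p)
    (A P : ℤ) (hcop : IsCoprime A P) (hPp : (p : ℤ) ∣ P) (hAP : ![(A : ℚ), (P : ℚ)] ≠ 0) :
    inOrb p (ratPt ((x : ℚ) / (p : ℚ)))
        (Projectivization.mk ℚ ![(A : ℚ), (P : ℚ)] hAP) ↔
      ((x : ZMod p) = (A : ZMod p) ∨ (x : ZMod p) = -(A : ZMod p)) := by
  have hp0 : (p : ℤ) ≠ 0 := by exact_mod_cast hp.pos.ne'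
  have hxZ : IsCoprime (x : ℤ) (p : ℤ) := by
    have : Nat.Coprime x p := Nat.Coprime.symm ((hp.coprime_iff_not_dvd).2
      (Nat.not_dvd_of_pos_of_lt (by omega) hxp))
    exact Nat.isCoprime_iff_coprime.2 this
  have hrat : ratPt ((x : ℚ) / (p : ℚ))
      = Projectivization.mk ℚ ![((x : ℤ) : ℚ), ((p : ℤ) : ℚ)]
          (vec_ne_zero₁ (Int.cast_ne_zero.2 hp0)) := by
    have h := ratPt_eq_mk (x : ℤ) (p : ℤ) hp0
    have harg : ((x : ℤ) : ℚ) / ((p : ℤ) : ℚ) = (x : ℚ) / (p : ℚ) := by push_cast; ring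
    rw [harg] at h
    exact h
  constructor
  · rintro ⟨γ, hγ, hact⟩
    obtain ⟨ha, hd, hc⟩ := (CongruenceSubgroup.Gamma1_mem p γ).1 hγ
    have hdet : γ.1 0 0 * γ.1 1 1 - γ.1 0 1 * γ.1 1 0 = 1 := by
      have := γ.2
      rwa [Matrix.det_fin_two] at this
    rw [hrat, actP1_mk, mk_congr _ (cast_mulVec γ.1 (x : ℤ) (p : ℤ))] at hact
    set u : ℤ := γ.1 0 0 * x + γ.1 0 1 * p with hu
    set w : ℤ := γ.1 1 0 * x + γ.1 1 1 * p with hw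
    rw [Projectivization.mk_eq_mk_iff] at hact
    obtain ⟨q, hq⟩ := hact
    have hq0 : (q : ℚ) * A = ((γ.1 0 0 * x + γ.1 0 1 * p : ℤ) : ℚ) := by
      have := congrFun hq 0; simpa [Units.smul_def] using this
    have hq1 : (q : ℚ) * P = ((γ.1 1 0 * x + γ.1 1 1 * p : ℤ) : ℚ) := by
      have := congrFun hq 1; simpa [Units.smul_def] using this
    have hcross : u * P = w * A := by
      have hQ : ((u * P : ℤ) : ℚ) = ((w * A : ℤ) : ℚ) := by
        push_cast [hu, hw]
        push_cast at hq0 hq1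
        rw [← hq0, ← hq1]; ring
      exact_mod_cast hQ
    -- coprimality of (u, w)
    have huw : IsCoprime u w := by
      obtain ⟨s, t, hst⟩ := hxZ
      refine ⟨s * γ.1 1 1 - t * γ.1 1 0, -(s * γ.1 0 1) + t * γ.1 0 0, ?_⟩
      rw [hu, hw]
      linear_combination hst + (s * (x : ℤ) + t * (p : ℤ)) * hdet
    -- x ≡ u mod p
    have hxu : (x : ZMod p) = (u : ZMod p) := by
      have : ((u : ℤ) : ZMod p) = ((γ.1 0 0 : ℤ) : ZMod p) * (x : ZMod p)
          + ((γ.1 0 1 : ℤ) : ZMod p) * ((p : ℕ) : ZMod p) := by push_cast [hu]; ring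
      rw [this, ha, ZMod.natCast_self, mul_zero, add_zero, one_mul]
    rw [hxu]
    -- w ∣ P and P ∣ w
    have hwP : w ∣ P := by
      refine (huw.symm).dvd_of_dvd_mul_left ?_
      exact ⟨A, by linear_combination hcross⟩
    have hPw : P ∣ w := by
      refine (hcop.symm).dvd_of_dvd_mul_left ?_
      exact ⟨u, by linear_combination -hcross⟩
    rcases eq_or_ne P 0 with hP0 | hP0
    · -- then w = 0 and u is a unit, A is a unit
      have hw0 : w = 0 := by simpa [hP0] using hPw
      have huu : IsUnit u := isCoprime_zero_right.1 (hw0 ▸ huw)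
      have hAu : IsUnit A := isCoprime_zero_right.1 (hP0 ▸ hcop)
      rcases Int.isUnit_iff.1 huu with h1 | h1 <;> rcases Int.isUnit_iff.1 hAu with h2 | h2 <;>
        simp [h1, h2]
    · have hassoc : w = P ∨ w = -P := by
        rcases Int.associated_iff.1 (associated_of_dvd_dvd hwP hPw) with h | h
        · exact Or.inl h
        · exact Or.inr h
      rcases hassoc with h | h
      · left
        have : u = A := by
          have := hcross
          rw [h] at this
          exact mul_right_cancel₀ hP0 (by linarith)
        rw [this]
      · right
        have : u = -A := by
          have := hcross
          rw [h] at this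
          have h2 : u * P = (-A) * P := by linarith
          exact mul_right_cancel₀ hP0 h2
        rw [this]; push_cast; ring
  · intro h
    obtain ⟨ε, hε, hxu⟩ : ∃ ε : ℤ, (ε = 1 ∨ ε = -1) ∧ ((p : ℤ) ∣ (x : ℤ) - ε * A) := by
      rcases h with h | h
      · refine ⟨1, Or.inl rfl, (ZMod.intCast_zmod_eq_zero_iff_dvd _ p).1 ?_⟩
        push_cast
        rw [sub_eq_zero, one_mul]
        exact h
      · refine ⟨-1, Or.inr rfl, (ZMod.intCast_zmod_eq_zero_iff_dvd _ p).1 ?_⟩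
        push_cast
        rw [sub_eq_zero, neg_one_mul]
        exact h
    set u : ℤ := ε * A with hu
    set v : ℤ := ε * P with hv
    have hcop' : IsCoprime u v := by
      show IsCoprime (ε * A) (ε * P)
      rcases hε with rfl | rfl
      · simpa using hcop
      · simpa [neg_one_mul] using hcop.neg_left.neg_right
    have hpv : (p : ℤ) ∣ v := Dvd.dvd.mul_left hPp ε
    obtain ⟨m, hm⟩ := hpv
    obtain ⟨k, hk⟩ := hxu
    obtain ⟨s, t, hst⟩ := hcop'
    obtain ⟨s', t', hst'⟩ := hxZ
    set f : ℤ := s with hf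
    set e : ℤ := -t with he
    set f' : ℤ := s' with hf'
    set e' : ℤ := -t' with he'
    have hB1 : u * f - v * e = 1 := by rw [hf, he]; linarith [hst]
    have hB2 : (x : ℤ) * f' - p * e' = 1 := by rw [hf', he']; linarith [hst']
    set M : Matrix (Fin 2) (Fin 2) ℤ :=
      !![u, e; v, f] * !![f', -e'; -(p : ℤ), (x : ℤ)] with hMdef
    have hM : M = !![u * f' + e * (-(p : ℤ)), u * (-e') + e * (x : ℤ);
                    v * f' + f * (-(p : ℤ)), v * (-e') + f * (x : ℤ)] := by
      rw [hMdef, Matrix.mul_fin_two]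
    have e00 : M 0 0 = u * f' + e * (-(p : ℤ)) := by rw [hM]; rfl
    have e01 : M 0 1 = u * (-e') + e * (x : ℤ) := by rw [hM]; rfl
    have e10 : M 1 0 = v * f' + f * (-(p : ℤ)) := by rw [hM]; rfl
    have e11 : M 1 1 = v * (-e') + f * (x : ℤ) := by rw [hM]; rfl
    have hMdet : M.det = 1 := by
      rw [hMdef, Matrix.det_mul, Matrix.det_fin_two_of, Matrix.det_fin_two_of]
      linear_combination (f' * x - e' * p) * hB1 + hB2
    set γ : Matrix.SpecialLinearGroup (Fin 2) ℤ := ⟨M, hMdet⟩ with hγdef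
    have hmem : γ ∈ CongruenceSubgroup.Gamma1 p := by
      rw [CongruenceSubgroup.Gamma1_mem]
      refine ⟨?_, ?_, ?_⟩
      · show ((M 0 0 : ℤ) : ZMod p) = 1
        rw [e00]
        exact int_zmod_eq_one ⟨-(k * f') + e' - e, by linear_combination hB2 - f' * hk⟩
      · show ((M 1 1 : ℤ) : ZMod p) = 1
        rw [e11]
        exact int_zmod_eq_one ⟨m * (e - e') + f * k,
          by linear_combination hB1 + f * hk + (e - e') * hm⟩
      · show ((M 1 0 : ℤ) : ZMod p) = 0
        rw [e10]
        exact int_zmod_eq_zero ⟨m * f' - f, by linear_combination f' * hm⟩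
    refine ⟨γ, hmem, ?_⟩
    have hact0 : (γ.1 0 0 * (x : ℤ) + γ.1 0 1 * (p : ℤ) : ℤ) = u := by
      show (M 0 0 * (x : ℤ) + M 0 1 * (p : ℤ) : ℤ) = u
      rw [e00, e01]; linear_combination u * hB2
    have hact1 : (γ.1 1 0 * (x : ℤ) + γ.1 1 1 * (p : ℤ) : ℤ) = v := by
      show (M 1 0 * (x : ℤ) + M 1 1 * (p : ℤ) : ℤ) = v
      rw [e10, e11]; linear_combination v * hB2
    rw [hrat, actP1_mk, mk_congr _ (cast_mulVec γ.1 (x : ℤ) (p : ℤ)),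
      mk_congr _ (show (![((γ.1 0 0 * (x : ℤ) + γ.1 0 1 * (p : ℤ) : ℤ) : ℚ),
          ((γ.1 1 0 * (x : ℤ) + γ.1 1 1 * (p : ℤ) : ℤ) : ℚ)]) = ![(u : ℚ), (v : ℚ)] by
        rw [hact0, hact1])]
    rw [Projectivization.mk_eq_mk_iff]
    refine ⟨⟨(ε : ℚ), (ε : ℚ), ?_, ?_⟩, ?_⟩
    · rcases hε with rfl | rfl <;> norm_num
    · rcases hε with rfl | rfl <;> norm_num
    · funext i
      fin_cases i <;> simp [Units.smul_def, hu, hv] <;> push_cast <;> ring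

end Cusp


section Omega
variable {p : ℕ} [hp : Fact p.Prime] (ω : ℤ → ℤ_[p])
  (hω_cong : ∀ m : ℤ, PadicInt.toZMod (ω m) = (m : ZMod p))
  (hω_teich : ∀ m : ℤ, ω m ^ p = ω m)

include hω_cong hω_teich

lemma omega_congr {m₁ m₂ : ℤ} (h : ((m₁ : ZMod p)) = (m₂ : ZMod p)) : ω m₁ = ω m₂ :=
  teich_unique (hω_teich m₁) (hω_teich m₂) (by rw [hω_cong, hω_cong, h])

lemma omega_mul (m₁ m₂ : ℤ) : ω (m₁ * m₂) = ω m₁ * ω m₂ :=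
  teich_unique (hω_teich _) (by rw [mul_pow, hω_teich, hω_teich])
    (by rw [map_mul, hω_cong, hω_cong, hω_cong]; push_cast; ring)

lemma omega_one : ω 1 = 1 :=
  teich_unique (hω_teich 1) (one_pow p)
    (by rw [hω_cong, map_one]; norm_num)

lemma omega_neg (hodd : Odd p) (m : ℤ) : ω (-m) = -ω m :=
  teich_unique (hω_teich _) (by rw [hodd.neg_pow, hω_teich])
    (by rw [map_neg, hω_cong, hω_cong]; push_cast; ring)

end Omega

section PhiE

lemma natCast_zmod_eq_iff {p : ℕ} (hp : 0 < p) {x y : ℕ} (hx : x < p) (hy : y < p) :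
    ((x : ZMod p) = (y : ZMod p)) ↔ x = y := by
  haveI : NeZero p := ⟨hp.ne'⟩
  constructor
  · intro h
    have := congrArg ZMod.val h
    rwa [ZMod.val_cast_of_lt hx, ZMod.val_cast_of_lt hy] at this
  · rintro rfl; rfl

variable {p : ℕ} [hp : Fact p.Prime] (ω : ℤ → ℤ_[p])
  (hω_cong : ∀ m : ℤ, PadicInt.toZMod (ω m) = (m : ZMod p))
  (hω_teich : ∀ m : ℤ, ω m ^ p = ω m)

include hω_cong hω_teich

lemma phiE_infty (hp5 : 5 ≤ p) (a : ℕ) (ha : p - 1 - a = 2) :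
    phiE p ω a inftyPt = 2 := by
  have hodd : Odd p := hp.out.odd_of_ne_two (by omega)
  rw [phiE]
  have hinf : inftyPt
      = Projectivization.mk ℚ ![((1 : ℤ) : ℚ), ((0 : ℤ) : ℚ)] (vec_ne_zero₀ (by norm_num)) := by
    rw [inftyPt]
    exact mk_congr _ (by norm_num)
  have hcond : ∀ x ∈ Finset.Ico 1 p,
      (if inOrb p (ratPt ((x : ℚ) / (p : ℚ))) inftyPt then ω (x : ℤ) ^ (p - 1 - a) else 0)
        = if x = 1 ∨ x = p - 1 then ω (x : ℤ) ^ (p - 1 - a) else 0 := by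
    intro x hx
    obtain ⟨hx1, hxp⟩ := Finset.mem_Ico.1 hx
    refine if_congr ?_ rfl rfl
    rw [hinf, inOrb_ratPt_iff hp.out hx1 hxp 1 0 isCoprime_one_left (dvd_zero _)]
    have h1 : ((1 : ℤ) : ZMod p) = ((1 : ℕ) : ZMod p) := by norm_num
    have h2 : (-((1 : ℤ) : ZMod p)) = ((p - 1 : ℕ) : ZMod p) := by
      push_cast [Nat.cast_sub hp.out.one_le]
      simp
    rw [h2, h1, natCast_zmod_eq_iff hp.out.pos hxp (by omega),
      natCast_zmod_eq_iff hp.out.pos hxp (by omega)]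
  rw [Finset.sum_congr rfl hcond, ← Finset.sum_filter]
  have hset : Finset.filter (fun x => x = 1 ∨ x = p - 1) (Finset.Ico 1 p) = {1, p - 1} := by
    ext y
    simp only [Finset.mem_filter, Finset.mem_Ico, Finset.mem_insert, Finset.mem_singleton]
    omega
  rw [hset, Finset.sum_pair (by omega : (1 : ℕ) ≠ p - 1), ha]
  have hω1 : ω ((1 : ℕ) : ℤ) = 1 := by
    rw [show ((1 : ℕ) : ℤ) = 1 by norm_num]
    exact omega_one ω hω_cong hω_teich
  have hωm1 : ω ((p - 1 : ℕ) : ℤ) = -1 := by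
    rw [omega_congr ω hω_cong hω_teich
      (show (((p - 1 : ℕ) : ℤ) : ZMod p) = ((-1 : ℤ) : ZMod p) by
        push_cast [Nat.cast_sub hp.out.one_le]; simp),
      show (-1 : ℤ) = -(1 : ℤ) by norm_num, omega_neg ω hω_cong hω_teich hodd,
      omega_one ω hω_cong hω_teich]
  rw [hω1, hωm1]
  norm_num

lemma phiE_ratPt (hp5 : 5 ≤ p) (a : ℕ) (ha : p - 1 - a = 2) (A : ℕ) (hA : ¬ p ∣ A) (n : ℕ) :
    phiE p ω a (ratPt ((A : ℚ) / (p : ℚ) ^ (n + 1))) = 2 * ω (A : ℤ) ^ 2 := by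
  have hodd : Odd p := hp.out.odd_of_ne_two (by omega)
  have hoddm : p % 2 = 1 := Nat.odd_iff.1 hodd
  have hpZ0 : (p : ℤ) ≠ 0 := by exact_mod_cast hp.out.pos.ne'
  have hcop : IsCoprime (A : ℤ) ((p : ℤ) ^ (n + 1)) := by
    refine IsCoprime.pow_right ?_
    exact Nat.isCoprime_iff_coprime.2 (Nat.Coprime.symm ((hp.out.coprime_iff_not_dvd).2 hA))
  have hpt : ratPt ((A : ℚ) / (p : ℚ) ^ (n + 1))
      = Projectivization.mk ℚ ![((A : ℤ) : ℚ), (((p : ℤ) ^ (n + 1) : ℤ) : ℚ)]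
          (vec_ne_zero₁ (Int.cast_ne_zero.2 (pow_ne_zero _ hpZ0))) := by
    have h := ratPt_eq_mk (A : ℤ) ((p : ℤ) ^ (n + 1)) (pow_ne_zero _ hpZ0)
    rw [show (((A : ℤ) : ℚ)) / (((p : ℤ) ^ (n + 1) : ℤ) : ℚ) = (A : ℚ) / (p : ℚ) ^ (n + 1) by
      push_cast; ring] at h
    exact h
  set r := A % p with hr
  have hr0 : 0 < r := by
    rcases Nat.eq_zero_or_pos r with h | h
    · exact absurd (Nat.dvd_iff_mod_eq_zero.mpr h) hA
    · exact h
  have hrp : r < p := Nat.mod_lt _ hp.out.pos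
  have hcastA' : ((r : ℕ) : ZMod p) = ((A : ℕ) : ZMod p) := by
    rw [hr, ZMod.natCast_mod]
  have hcastA : (((r : ℕ) : ℤ) : ZMod p) = ((A : ℤ) : ZMod p) := by
    push_cast
    exact hcastA'
  rw [phiE, hpt]
  have hcond : ∀ x ∈ Finset.Ico 1 p,
      (if inOrb p (ratPt ((x : ℚ) / (p : ℚ)))
          (Projectivization.mk ℚ ![((A : ℤ) : ℚ), (((p : ℤ) ^ (n + 1) : ℤ) : ℚ)]
            (vec_ne_zero₁ (Int.cast_ne_zero.2 (pow_ne_zero _ hpZ0))))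
        then ω (x : ℤ) ^ (p - 1 - a) else 0)
        = if x = r ∨ x = p - r then ω (x : ℤ) ^ (p - 1 - a) else 0 := by
    intro x hx
    obtain ⟨hx1, hxp⟩ := Finset.mem_Ico.1 hx
    refine if_congr ?_ rfl rfl
    rw [inOrb_ratPt_iff hp.out hx1 hxp (A : ℤ) ((p : ℤ) ^ (n + 1)) hcop
      (dvd_pow_self _ (Nat.succ_ne_zero n))]
    rw [← hcastA]
    have h2 : (-(((r : ℕ) : ℤ) : ZMod p)) = ((p - r : ℕ) : ZMod p) := by
      push_cast [Nat.cast_sub hrp.le]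
      simp
    rw [h2, show ((((r : ℕ) : ℤ)) : ZMod p) = ((r : ℕ) : ZMod p) by push_cast; ring,
      natCast_zmod_eq_iff hp.out.pos hxp hrp, natCast_zmod_eq_iff hp.out.pos hxp (by omega)]
  rw [Finset.sum_congr rfl hcond, ← Finset.sum_filter]
  have hset : Finset.filter (fun x => x = r ∨ x = p - r) (Finset.Ico 1 p) = {r, p - r} := by
    ext y
    simp only [Finset.mem_filter, Finset.mem_Ico, Finset.mem_insert, Finset.mem_singleton]
    omega
  rw [hset, Finset.sum_pair (by omega : r ≠ p - r), ha]
  have hω1 : ω ((r : ℕ) : ℤ) = ω (A : ℤ) := omega_congr ω hω_cong hω_teich hcastA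
  have hcast2 : (((p - r : ℕ) : ℤ) : ZMod p) = (((-(A : ℤ) : ℤ)) : ZMod p) := by
    push_cast [Nat.cast_sub hrp.le, ZMod.natCast_self]
    linear_combination -hcastA'
  have hω2 : ω ((p - r : ℕ) : ℤ) = -ω (A : ℤ) := by
    rw [omega_congr ω hω_cong hω_teich hcast2, omega_neg ω hω_cong hω_teich hodd]
  rw [hω1, hω2]
  ring

end PhiE


section GroupRing

lemma choose_sum_nat (N i : ℕ) (hN : 1 ≤ N) :
    ∑ j ∈ Finset.range N, (if i ≤ j then j.choose i else 0) = N.choose (i + 1) := by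
  rw [← Finset.sum_filter]
  have hfil : Finset.filter (fun j => i ≤ j) (Finset.range N) = Finset.Icc i (N - 1) := by
    ext t
    simp only [Finset.mem_filter, Finset.mem_range, Finset.mem_Icc]
    omega
  rw [hfil, Nat.sum_Icc_choose, Nat.sub_add_cancel hN]

lemma geom_sum_eq_choose {B : Type} [CommRing B] (S : B) (N : ℕ) (hN : 1 ≤ N) :
    ∑ j ∈ Finset.range N, S ^ j
      = ∑ i ∈ Finset.range N, (N.choose (i + 1) : B) * (S - 1) ^ i := by
  set X := S - 1 with hX
  have hS : S = X + 1 := by rw [hX]; ring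
  calc ∑ j ∈ Finset.range N, S ^ j
      = ∑ j ∈ Finset.range N, ∑ i ∈ Finset.range N,
          (if i ≤ j then X ^ i * (j.choose i : B) else 0) := by
        refine Finset.sum_congr rfl fun j hj => ?_
        rw [hS, add_pow]
        have hfil : Finset.range (j + 1) = Finset.filter (fun i => i ≤ j) (Finset.range N) := by
          have hjN := Finset.mem_range.1 hj
          ext t
          simp only [Finset.mem_filter, Finset.mem_range]
          omega
        rw [hfil, Finset.sum_filter]
        refine Finset.sum_congr rfl fun i _ => ?_
        refine if_congr Iff.rfl ?_ rfl
        rw [one_pow, mul_one]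
    _ = ∑ i ∈ Finset.range N, ∑ j ∈ Finset.range N,
          (if i ≤ j then X ^ i * (j.choose i : B) else 0) := Finset.sum_comm
    _ = ∑ i ∈ Finset.range N, (N.choose (i + 1) : B) * X ^ i := by
        refine Finset.sum_congr rfl fun i _ => ?_
        have h1 : ∀ j, (if i ≤ j then X ^ i * (j.choose i : B) else 0)
            = X ^ i * (if i ≤ j then (j.choose i : B) else 0) := by
          intro j
          by_cases h : i ≤ j <;> simp [h]
        rw [Finset.sum_congr rfl fun j _ => h1 j, ← Finset.mul_sum]
        have h2 : ∑ j ∈ Finset.range N, (if i ≤ j then (j.choose i : B) else 0)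
            = ((∑ j ∈ Finset.range N, (if i ≤ j then j.choose i else 0) : ℕ) : B) := by
          rw [Nat.cast_sum]
          refine Finset.sum_congr rfl fun j _ => ?_
          by_cases h : i ≤ j <;> simp [h]
        rw [h2, choose_sum_nat N i hN, mul_comm]

theorem master (p : ℕ) [hp : Fact p.Prime] (hp5 : 5 ≤ p)
    (ω : ℤ → ℤ_[p])
    (hω_cong : ∀ m : ℤ, PadicInt.toZMod (ω m) = (m : ZMod p))
    (hω_teich : ∀ m : ℤ, ω m ^ p = ω m)
    (aa : ℕ) (ha : p - 1 - aa = 2)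
    (n : ℕ) (G : Type) [CommGroup G] [Fintype G] (hG : Fintype.card G = p ^ n)
    (π : (ZMod (p ^ (n + 1)))ˣ →* G) (hπ : Function.Surjective π)
    (γ : G) (hγ : orderOf γ = p ^ n) :
    hasMuLambda p (p ^ n) γ
      (MTel p n π (fun a => phiE p ω aa inftyPt -
        phiE p ω aa (ratPt (((a : ZMod (p ^ (n + 1))).val : ℚ) / (p : ℚ) ^ (n + 1)))))
      0 (p ^ n - 1) := by
  classical
  set N := p ^ n with hN
  have hN1 : 1 ≤ N := Nat.one_le_pow _ _ hp.out.pos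
  set U := (ZMod (p ^ (n + 1)))ˣ
  set χ : U → ℤ_[p] := fun a => ω (((a : ZMod (p ^ (n + 1))).val : ℤ)) ^ 2 with hχ
  -- the coefficient function
  have hAdvd : ∀ a : U, ¬ p ∣ ((a : ZMod (p ^ (n + 1))).val) := by
    intro a hdvd
    have h1 := ZMod.val_coe_unit_coprime a
    have h2 : p ∣ Nat.gcd ((a : ZMod (p ^ (n + 1))).val) (p ^ (n + 1)) :=
      Nat.dvd_gcd hdvd (dvd_pow_self p (Nat.succ_ne_zero n))
    rw [h1] at h2
    have := Nat.le_of_dvd one_pos h2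
    omega
  have hc : ∀ a : U,
      (phiE p ω aa inftyPt -
        phiE p ω aa (ratPt (((a : ZMod (p ^ (n + 1))).val : ℚ) / (p : ℚ) ^ (n + 1))))
      = 2 - 2 * χ a := by
    intro a
    rw [phiE_infty ω hω_cong hω_teich hp5 aa ha,
      phiE_ratPt ω hω_cong hω_teich hp5 aa ha ((a : ZMod (p ^ (n + 1))).val) (hAdvd a) n]
  -- the element t₀
  have h2cop : Nat.Coprime 2 (p ^ (n + 1)) := by
    refine (Nat.coprime_primes Nat.prime_two hp.out).2 (by omega) |>.pow_right _
  set t₀ : U := (ZMod.unitOfCoprime 2 h2cop) ^ (p ^ n) with ht₀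
  have hπt₀ : π t₀ = 1 := by
    rw [ht₀, map_pow]
    show π (ZMod.unitOfCoprime 2 h2cop) ^ N = 1
    rw [← hG]
    exact pow_card_eq_one
  -- reduction to ZMod p
  set red : ZMod (p ^ (n + 1)) →+* ZMod p :=
    ZMod.castHom (dvd_pow_self p (Nat.succ_ne_zero n)) (ZMod p) with hred
  have hredval : ∀ z : ZMod (p ^ (n + 1)), ((z.val : ℕ) : ZMod p) = red z := by
    intro z
    rw [ZMod.natCast_val, ZMod.castHom_apply]
  have hfermat : ∀ k : ℕ, (2 : ZMod p) ^ (p ^ k) = 2 := by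
    intro k
    induction k with
    | zero => simp
    | succ k ih => rw [pow_succ, pow_mul, ih, ZMod.pow_card]
  have ht₀val : (((t₀ : ZMod (p ^ (n + 1))).val : ℕ) : ZMod p) = 2 := by
    rw [hredval]
    have hv : ((t₀ : ZMod (p ^ (n + 1)))) = (2 : ZMod (p ^ (n + 1))) ^ (p ^ n) := by
      rw [ht₀, Units.val_pow_eq_pow_val, ZMod.coe_unitOfCoprime]
      norm_num
    rw [hv, map_pow]
    have h2' : red (2 : ZMod (p ^ (n + 1))) = 2 := by
      rw [show (2 : ZMod (p ^ (n + 1))) = ((2 : ℕ) : ZMod (p ^ (n + 1))) by norm_num,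
        map_natCast]
      norm_num
    rw [h2', hfermat]
  -- χ is multiplicative
  have hχmul : ∀ a b : U, χ (a * b) = χ a * χ b := by
    intro a b
    rw [hχ]
    simp only
    rw [← mul_pow]
    congr 1
    rw [← omega_mul ω hω_cong hω_teich]
    apply omega_congr ω hω_cong hω_teich
    push_cast
    rw [hredval, hredval, hredval, Units.val_mul, map_mul]
  -- χ t₀ ≠ 1
  have hχt₀ : χ t₀ ≠ 1 := by
    intro hsq
    rw [hχ] at hsq
    simp only [sq] at hsq
    rcases mul_self_eq_one_iff.1 hsq with h1 | h1
    · have := congrArg PadicInt.toZMod h1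
      rw [hω_cong, map_one] at this
      rw [show ((((t₀ : ZMod (p ^ (n + 1))).val : ℕ) : ℤ) : ZMod p)
          = (((t₀ : ZMod (p ^ (n + 1))).val : ℕ) : ZMod p) by push_cast; ring, ht₀val] at this
      have h2 : ((1 : ℕ) : ZMod p) = 0 := by push_cast; linear_combination this
      have h3 := (ZMod.natCast_eq_zero_iff 1 p).1 h2
      have := Nat.le_of_dvd one_pos h3
      omega
    · have := congrArg PadicInt.toZMod h1
      rw [hω_cong, map_neg, map_one] at this
      rw [show ((((t₀ : ZMod (p ^ (n + 1))).val : ℕ) : ℤ) : ZMod p)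
          = (((t₀ : ZMod (p ^ (n + 1))).val : ℕ) : ZMod p) by push_cast; ring, ht₀val] at this
      have h2 : ((3 : ℕ) : ZMod p) = 0 := by push_cast; linear_combination this
      have h3 := (ZMod.natCast_eq_zero_iff 3 p).1 h2
      have := Nat.le_of_dvd (by norm_num) h3
      omega
  -- fiberwise vanishing of χ
  have hfib0 : ∀ g : G, ∑ a ∈ Finset.univ.filter (fun a => π a = g), χ a = 0 := by
    intro g
    set S₀ := ∑ a ∈ Finset.univ.filter (fun a => π a = g), χ a with hS₀
    have hre : ∑ a ∈ Finset.univ.filter (fun a => π a = g), χ (a * t₀) = S₀ := by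
      refine Finset.sum_equiv (Equiv.mulRight t₀) ?_ ?_
      · intro a
        simp only [Finset.mem_filter, Finset.mem_univ, true_and, Equiv.coe_mulRight]
        rw [map_mul, hπt₀, mul_one]
      · intro a _
        rfl
    have hre2 : ∑ a ∈ Finset.univ.filter (fun a => π a = g), χ (a * t₀) = χ t₀ * S₀ := by
      rw [hS₀, Finset.mul_sum]
      refine Finset.sum_congr rfl fun a _ => ?_
      rw [hχmul, mul_comm]
    have : (χ t₀ - 1) * S₀ = 0 := by
      rw [sub_mul, one_mul, ← hre2, hre, sub_self]
    rcases mul_eq_zero.1 this with h | h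
    · exact absurd (by linear_combination h : χ t₀ = 1) hχt₀
    · exact h
  -- fibers have cardinality p - 1
  have hcard : ∀ g : G, (Finset.univ.filter (fun a => π a = g)).card = p - 1 := by
    have hsame : ∀ g : G, (Finset.univ.filter (fun a => π a = g)).card
        = (Finset.univ.filter (fun a => π a = (1 : G))).card := by
      intro g
      obtain ⟨a₀, ha₀⟩ := hπ g
      refine Finset.card_bij' (fun a _ => a * a₀⁻¹) (fun b _ => b * a₀) ?_ ?_ ?_ ?_
      · intro a ha
        simp only [Finset.mem_filter, Finset.mem_univ, true_and] at ha ⊢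
        rw [map_mul, ha, map_inv, ha₀, mul_inv_cancel]
      · intro b hb
        simp only [Finset.mem_filter, Finset.mem_univ, true_and] at hb ⊢
        rw [map_mul, hb, ha₀, one_mul]
      · intro a _; group
      · intro b _; group
    have htot : ∑ g : G, (Finset.univ.filter (fun a => π a = g)).card
        = Fintype.card U := by
      rw [← Finset.card_univ]
      exact (Finset.card_eq_sum_card_fiberwise (fun a _ => Finset.mem_univ (π a))).symm
    have hUcard : Fintype.card U = p ^ n * (p - 1) := by
      rw [show Fintype.card U = Fintype.card (ZMod (p ^ (n + 1)))ˣ from rfl,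
        ZMod.card_units_eq_totient, Nat.totient_prime_pow_succ hp.out]
    rw [Finset.sum_congr rfl (fun g _ => hsame g), Finset.sum_const, Finset.card_univ, hG,
      hUcard, smul_eq_mul] at htot
    have hone : (Finset.univ.filter (fun a => π a = (1 : G))).card = p - 1 :=
      Nat.eq_of_mul_eq_mul_left (show 0 < N by positivity) htot
    intro g
    rw [hsame g, hone]
  -- assemble
  set Of : G →* MonoidAlgebra ℤ_[p] G := MonoidAlgebra.of ℤ_[p] G with hOf
  set X : MonoidAlgebra ℤ_[p] G := Of γ - 1 with hXdef
  refine ⟨fun i => ((2 * (p - 1) * N.choose (i + 1) : ℕ) : ℤ_[p]), ?_, ?_, ?_, ?_⟩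
  · -- the main identity
    set k : ℤ_[p] := ((2 * (p - 1) : ℕ) : ℤ_[p]) with hk
    have step1 : MTel p n π (fun a => phiE p ω aa inftyPt -
        phiE p ω aa (ratPt (((a : ZMod (p ^ (n + 1))).val : ℚ) / (p : ℚ) ^ (n + 1))))
        = ∑ g : G, k • Of g := by
      rw [MTel]
      rw [← Finset.sum_fiberwise_of_maps_to (fun a (_ : a ∈ Finset.univ) => Finset.mem_univ (π a))
        (fun a => (phiE p ω aa inftyPt -
          phiE p ω aa (ratPt (((a : ZMod (p ^ (n + 1))).val : ℚ) / (p : ℚ) ^ (n + 1))))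
            • Of (π a))]
      refine Finset.sum_congr rfl fun g _ => ?_
      have e1 : ∑ a ∈ Finset.univ.filter (fun a => π a = g),
          (phiE p ω aa inftyPt -
            phiE p ω aa (ratPt (((a : ZMod (p ^ (n + 1))).val : ℚ) / (p : ℚ) ^ (n + 1))))
            • Of (π a)
          = ∑ a ∈ Finset.univ.filter (fun a => π a = g), (2 - 2 * χ a) • Of g := by
        refine Finset.sum_congr rfl fun a ha => ?_
        rw [hc a, (Finset.mem_filter.1 ha).2]
      rw [e1, ← Finset.sum_smul]
      congr 1
      rw [Finset.sum_sub_distrib, Finset.sum_const, ← Finset.mul_sum, hfib0 g, mul_zero,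
        sub_zero, hcard g, nsmul_eq_mul, hk]
      push_cast
      ring
    rw [step1]
    have hbij : Function.Bijective (fun j : Fin N => γ ^ (j : ℕ)) := by
      rw [Fintype.bijective_iff_injective_and_card]
      constructor
      · intro i j hij
        refine Fin.ext (pow_injOn_Iio_orderOf ?_ ?_ hij)
        · rw [hγ]; exact i.2
        · rw [hγ]; exact j.2
      · rw [Fintype.card_fin, hG]
    have hsum : ∑ g : G, Of g = ∑ j ∈ Finset.range N, (Of γ) ^ j := by
      rw [← Fin.sum_univ_eq_sum_range (fun j => (Of γ) ^ j) N]
      exact (Fintype.sum_bijective _ hbij _ _ (fun j => by rw [← map_pow])).symm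
    rw [← Finset.smul_sum, hsum, geom_sum_eq_choose _ N hN1, Finset.smul_sum]
    refine Finset.sum_congr rfl fun i _ => ?_
    have e2 : ((N.choose (i + 1) : ℕ) : MonoidAlgebra ℤ_[p] G) * (Of γ - 1) ^ i
        = ((N.choose (i + 1) : ℕ) : ℤ_[p]) • (Of γ - 1) ^ i := by
      rw [← nsmul_eq_mul, Nat.cast_smul_eq_nsmul]
    rw [e2, smul_smul]
    congr 1
    rw [hk]
    push_cast
    ring
  · intro i _
    simpa using one_dvd _
  · intro i hi
    rw [zero_add, pow_one]
    have hdvd : p ∣ 2 * (p - 1) * N.choose (i + 1) := by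
      refine Dvd.dvd.mul_left ?_ _
      exact hp.out.dvd_choose_pow (Nat.succ_ne_zero i) (by omega)
    exact_mod_cast Nat.cast_dvd_cast (α := ℤ_[p]) hdvd
  · rw [zero_add, pow_one]
    intro hdvd
    have he : (2 * (p - 1) * N.choose (N - 1 + 1) : ℕ) = 2 * (p - 1) := by
      rw [Nat.sub_add_cancel hN1, Nat.choose_self, mul_one]
    have hdvd' : (p : ℤ_[p]) ∣ ((2 * (p - 1) : ℕ) : ℤ_[p]) := by
      have h0 : (p : ℤ_[p]) ∣ ((2 * (p - 1) * N.choose (N - 1 + 1) : ℕ) : ℤ_[p]) := hdvd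
      rwa [he] at h0
    obtain ⟨y, hy⟩ := hdvd'
    have h0 : PadicInt.toZMod (((2 * (p - 1) : ℕ) : ℤ_[p])) = 0 := by
      rw [hy, map_mul, map_natCast, ZMod.natCast_self, zero_mul]
    rw [map_natCast] at h0
    have h3 := (ZMod.natCast_eq_zero_iff _ p).1 h0
    rcases (Nat.Prime.dvd_mul hp.out).1 h3 with h | h
    · have := Nat.le_of_dvd (by norm_num) h
      omega
    · have := Nat.le_of_dvd (by omega) h
      omega

end GroupRing

end

/-- Theorem B: let `p ∈ {5, 7}` and let `θ_{n,p}` denote the level-`n` `p`-adic Mazur–Tate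
element attached to (the boundary symbol of) the Eisenstein series `E_p`, where
`E_5 = E_{2, ω_5², 𝟙}` and `E_7 = E_{2, ω_7⁴, 𝟙}`.  Then for every `n ≥ 1`,
`λ(θ_{n,p}) = pⁿ - 1` (computed with respect to any generator `γ` of `𝒢ₙ`).
Here `ω` is the Teichmüller character mod `p`, characterized by `ω(m) ≡ m (mod p)` together
with its values being Teichmüller representatives (`ω(m)^p = ω(m)`). -/
theorem lambda_of_mazur_tate_eisenstein
    (p : ℕ) [Fact p.Prime] (hp : p = 5 ∨ p = 7)
    (ω : ℤ → ℤ_[p])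
    (hω_cong : ∀ m : ℤ, PadicInt.toZMod (ω m) = (m : ZMod p))
    (hω_teich : ∀ m : ℤ, ω m ^ p = ω m)
    (n : ℕ) (hn : 1 ≤ n)
    (G : Type) [CommGroup G] [Fintype G] (hG : Fintype.card G = p ^ n)
    (π : (ZMod (p ^ (n + 1)))ˣ →* G) (hπ : Function.Surjective π) :
    ∀ γ : G, orderOf γ = p ^ n →
      ∃ m : ℕ, hasMuLambda p (p ^ n) γ
        (MTel p n π (fun a =>
          phiE p ω (if p = 5 then 2 else 4) inftyPt -
            phiE p ω (if p = 5 then 2 else 4)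
              (ratPt (((a : ZMod (p ^ (n + 1))).val : ℚ) / (p : ℚ) ^ (n + 1)))))
        m (p ^ n - 1) := by
  intro γ hγ
  refine ⟨0, ?_⟩
  rcases hp with rfl | rfl
  · simp only [show (if (5:ℕ) = 5 then 2 else 4) = 2 from rfl]
    exact master 5 (by norm_num) ω hω_cong hω_teich 2 (by norm_num) n G hG π hπ γ hγ
  · simp only [show (if (7:ℕ) = 5 then 2 else 4) = 4 by norm_num]
    exact master 7 (by norm_num) ω hω_cong hω_teich 4 (by norm_num) n G hG π hπ γ hγ
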